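/- Let (T, 𝒜, μ) be a finite measure space with 0 < μ(T) < ∞, let T₀ ∈ 𝒜 with μ(T₀) > 0, let f̃ : T₀ → ℝ be measurable with f̃ > 0 and ∫_{T₀} (log f̃)^2 dμ < ∞, and let g : T → ℝ be measurable with g > 0 and ∫_T (log g)^2 dμ < ∞. Define the embedding ι(f̃) : T → ℝ by ι(f̃)(t) = f̃(t) for t ∈ T₀ and ι(f̃)(t) = exp(S_{μ,T₀}(f̃)) for t ∈ T ∖ T₀. Then S_{μ,T}(ι(f̃)) = S_{μ,T₀}(f̃), and the embedding preserves the Bayes inner product: ∫_T (log ι(f̃) − S_{μ,T}(ι(f̃))) · (log g − S_{μ,T}(g)) dμ = ∫_{T₀} (log f̃ − S_{μ,T₀}(f̃)) · (log g − S_{μ,T₀}(g)) dμ. -/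

import Mathlib

open MeasureTheory

/-- Mean logarithmic integral of `f` over a measurable set `A`:
`S_{μ,A}(f) = (1/μ(A)) ∫_A log f dμ`. -/
noncomputable def Sm {T : Type*} [MeasurableSpace T] (μ : Measure T) (A : Set T)
    (f : T → ℝ) : ℝ :=
  (μ A).toReal⁻¹ * ∫ t in A, Real.log (f t) ∂μ

open scoped Classical in
/-- The canonical embedding of a density on `T₀` into the Bayes Hilbert space on `T`: it equals
`f` on `T₀` and the geometric mean `exp(S_{μ,T₀}(f))` off `T₀`. -/
noncomputable def iota {T : Type*} [MeasurableSpace T] (μ : Measure T) (T₀ : Set T)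
    (f : T → ℝ) (t : T) : ℝ :=
  if t ∈ T₀ then f t else Real.exp (Sm μ T₀ f)

/-- Product of two functions with integrable squares is integrable. -/
lemma integrable_mul_of_sq {α : Type*} [MeasurableSpace α] {μ : Measure α} {f g : α → ℝ}
    (hf : AEStronglyMeasurable f μ) (hg : AEStronglyMeasurable g μ)
    (hf2 : Integrable (fun x => f x ^ 2) μ) (hg2 : Integrable (fun x => g x ^ 2) μ) :
    Integrable (fun x => f x * g x) μ := by
  refine Integrable.mono' (hf2.add hg2) (hf.mul hg) ?_
  filter_upwards with x
  have h1 : ‖f x * g x‖ = |f x * g x| := Real.norm_eq_abs _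
  rw [h1, abs_mul]
  simp only [Pi.add_apply]
  nlinarith [sq_nonneg (|f x| - |g x|), sq_abs (f x), sq_abs (g x), abs_nonneg (f x),
    abs_nonneg (g x)]

/-- Square-integrability of `f` on a finite-measure space implies integrability. -/
lemma integrable_of_sq {α : Type*} [MeasurableSpace α] {μ : Measure α} [IsFiniteMeasure μ]
    {f : α → ℝ} (hf : AEStronglyMeasurable f μ) (hf2 : Integrable (fun x => f x ^ 2) μ) :
    Integrable f μ := by
  refine Integrable.mono' (hf2.add (integrable_const 1)) hf ?_
  filter_upwards with x
  have h1 : ‖f x‖ = |f x| := Real.norm_eq_abs _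
  rw [h1]
  simp only [Pi.add_apply]
  nlinarith [sq_nonneg (|f x| - 1), sq_abs (f x), abs_nonneg (f x)]

/-- The embedding `ι : B²(T₀) ↪ B²(T)` satisfies `S_{μ,T}(ι(f̃)) = S_{μ,T₀}(f̃)` and preserves
the Bayes inner product:
`∫_T clr_T[ι(f̃)] · clr_T[g] dμ = ∫_{T₀} clr_{T₀}[f̃] · clr_{T₀}[g] dμ`. -/
theorem iota_S_eq_and_preserves_inner
    {T : Type*} [MeasurableSpace T] (μ : Measure T)
    (hμ0 : 0 < μ Set.univ) (hμfin : μ Set.univ < ⊤)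
    (T₀ : Set T) (hT₀meas : MeasurableSet T₀) (hT₀pos : 0 < μ T₀)
    (ft : T → ℝ) (hft : Measurable ft) (hftpos : ∀ t ∈ T₀, 0 < ft t)
    (hftsq : IntegrableOn (fun t => (Real.log (ft t)) ^ 2) T₀ μ)
    (g : T → ℝ) (hg : Measurable g) (hgpos : ∀ t, 0 < g t)
    (hgsq : Integrable (fun t => (Real.log (g t)) ^ 2) μ) :
    Sm μ Set.univ (iota μ T₀ ft) = Sm μ T₀ ft ∧
      ∫ t, (Real.log (iota μ T₀ ft t) - Sm μ Set.univ (iota μ T₀ ft)) *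
          (Real.log (g t) - Sm μ Set.univ g) ∂μ =
        ∫ t in T₀, (Real.log (ft t) - Sm μ T₀ ft) *
          (Real.log (g t) - Sm μ T₀ g) ∂μ := by
  classical
  haveI : IsFiniteMeasure μ := ⟨hμfin⟩
  set S₀ := Sm μ T₀ ft with hS₀def
  set h : T → ℝ := fun t => Real.log (ft t) with hhdef
  set k : T → ℝ := fun t => Real.log (g t) with hkdef
  have hμT₀ : (μ T₀).toReal ≠ 0 :=
    (ENNReal.toReal_pos hT₀pos.ne' (measure_ne_top μ T₀)).ne'
  have hμU : (μ Set.univ).toReal ≠ 0 :=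
    (ENNReal.toReal_pos hμ0.ne' (measure_ne_top μ _)).ne'
  have hmh : Measurable h := hft.log
  have hmk : Measurable k := hg.log
  -- integrability of log ft on T₀
  have hInth : IntegrableOn h T₀ μ :=
    integrable_of_sq hmh.aestronglyMeasurable.restrict hftsq
  have hIntk : Integrable k μ :=
    integrable_of_sq hmk.aestronglyMeasurable hgsq
  -- the key integral identity
  have hIh : ∫ t in T₀, h t ∂μ = (μ T₀).toReal * S₀ := by
    rw [hS₀def, Sm]
    field_simp
    rfl
  -- pointwise description of log ∘ iota
  have hP : ∀ t, Real.log (iota μ T₀ ft t) = if t ∈ T₀ then h t else S₀ := by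
    intro t
    by_cases ht : t ∈ T₀ <;> simp [iota, ht, Real.log_exp, hhdef, hS₀def]
  -- first claim
  have hlogiota : (fun t => Real.log (iota μ T₀ ft t))
      = T₀.piecewise h (fun _ => S₀) := by
    funext t
    rw [hP t, Set.piecewise]
  have hIntP : Integrable (fun t => Real.log (iota μ T₀ ft t)) μ := by
    rw [hlogiota]
    exact Integrable.piecewise hT₀meas hInth ((integrableOn_const_iff).mpr (Or.inr (measure_lt_top _ _)))
  have hcompl : ∫ t in T₀ᶜ, Real.log (iota μ T₀ ft t) ∂μ = (μ T₀ᶜ).toReal * S₀ := by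
    rw [setIntegral_congr_fun hT₀meas.compl (fun t ht => by
      rw [hP t, if_neg ht]), setIntegral_const, smul_eq_mul]
    rfl
  have hon : ∫ t in T₀, Real.log (iota μ T₀ ft t) ∂μ = (μ T₀).toReal * S₀ := by
    rw [setIntegral_congr_fun hT₀meas (fun t ht => by rw [hP t, if_pos ht]), hIh]
  have hsum : (μ T₀).toReal + (μ T₀ᶜ).toReal = (μ Set.univ).toReal := by
    rw [← ENNReal.toReal_add (measure_ne_top _ _) (measure_ne_top _ _),
      measure_add_measure_compl hT₀meas]
  have hfirst : Sm μ Set.univ (iota μ T₀ ft) = S₀ := by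
    rw [Sm, Measure.restrict_univ, ← integral_add_compl hT₀meas hIntP, hon, hcompl,
      ← add_mul, hsum]
    field_simp
  refine ⟨hfirst, ?_⟩
  -- second claim
  set Sg := Sm μ Set.univ g with hSgdef
  set Sg₀ := Sm μ T₀ g with hSg0def
  rw [hfirst]
  -- reduce the LHS integral to an integral over T₀
  have hind : (fun t => (Real.log (iota μ T₀ ft t) - S₀) * (k t - Sg))
      = T₀.indicator (fun t => (h t - S₀) * (k t - Sg)) := by
    funext t
    by_cases ht : t ∈ T₀
    · rw [Set.indicator_of_mem ht, hP t, if_pos ht]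
    · rw [Set.indicator_of_notMem ht, hP t, if_neg ht, sub_self, zero_mul]
  rw [hind, integral_indicator hT₀meas]
  -- integrability facts on T₀
  have hIh2 : IntegrableOn (fun t => (h t - S₀) ^ 2) T₀ μ := by
    have : (fun t => (h t - S₀) ^ 2) = fun t => h t ^ 2 - (2 * S₀) * h t + S₀ ^ 2 := by
      funext t; ring
    rw [this]
    exact (hftsq.sub (hInth.const_mul _)).add (integrable_const _)
  have hIk2 : IntegrableOn (fun t => (k t - Sg₀) ^ 2) T₀ μ := by
    have : (fun t => (k t - Sg₀) ^ 2) = fun t => k t ^ 2 - (2 * Sg₀) * k t + Sg₀ ^ 2 := by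
      funext t; ring
    rw [this]
    exact (hgsq.restrict.sub ((hIntk.restrict).const_mul _)).add (integrable_const _)
  have hprod : IntegrableOn (fun t => (h t - S₀) * (k t - Sg₀)) T₀ μ :=
    integrable_mul_of_sq
      ((hmh.sub measurable_const).aestronglyMeasurable.restrict)
      ((hmk.sub measurable_const).aestronglyMeasurable.restrict) hIh2 hIk2
  have hIsub : IntegrableOn (fun t => h t - S₀) T₀ μ := hInth.sub (integrable_const _)
  have hzero : ∫ t in T₀, (h t - S₀) ∂μ = 0 := by
    rw [integral_sub hInth (integrable_const _), hIh, setIntegral_const, smul_eq_mul, measureReal_def, sub_self]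
  -- split the product
  have hsplit : (fun t => (h t - S₀) * (k t - Sg))
      = fun t => (h t - S₀) * (k t - Sg₀) + (Sg₀ - Sg) * (h t - S₀) := by
    funext t; ring
  rw [hsplit, integral_add hprod (hIsub.const_mul _), integral_const_mul, hzero,
    mul_zero, add_zero]
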